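/- Let C be a preadditive category, J a category, F, G : J ⥤ CochainComplex(C, ℤ) functors. Suppose that for each object X of J we are given a chain map Ψ_X : G(X) ⟶ F(X), and for each morphism u : X ⟶ Y a degree −1 cochain Ψ¹(u) from G(X) to F(Y) with δΨ¹(u) = (cochain of Ψ_X ≫ F(u)) − (cochain of G(u) ≫ Ψ_Y). Then for any composable morphisms u₁ : X₀ ⟶ X₁ and u₂ : X₁ ⟶ X₂ in J, the degree −1 cochain λ² := ((cochain of G(u₁)) composed with Ψ¹(u₂)) + (Ψ¹(u₁) composed with (cochain of F(u₂))) − Ψ¹(u₁ ≫ u₂) from G(X₀) to F(X₂) satisfies δλ² = 0. -/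
import Mathlib


open CategoryTheory CochainComplex.HomComplex

/-- The second-level (m = 2) instance of the lemma `dλ^m = 0`: the obstruction
cocycle `λ² = G(u₁) ∘ Ψ¹(u₂) + Ψ¹(u₁) ∘ F(u₂) - Ψ¹(u₁ ≫ u₂)` is closed. -/
theorem stmt_3 {C : Type*} [Category C] [Preadditive C]
    {J : Type*} [Category J]
    (F G : J ⥤ CochainComplex C ℤ)
    (Ψ : ∀ X : J, G.obj X ⟶ F.obj X)
    (Ψ₁ : ∀ (X Y : J), (X ⟶ Y) → Cochain (G.obj X) (F.obj Y) (-1))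
    (hΨ₁ : ∀ (X Y : J) (u : X ⟶ Y), δ (-1) 0 (Ψ₁ X Y u) =
      Cochain.ofHom (Ψ X ≫ F.map u) - Cochain.ofHom (G.map u ≫ Ψ Y))
    {X₀ X₁ X₂ : J} (u₁ : X₀ ⟶ X₁) (u₂ : X₁ ⟶ X₂) :
    δ (-1) 0 ((Cochain.ofHom (G.map u₁)).comp (Ψ₁ X₁ X₂ u₂) (by omega) +
        (Ψ₁ X₀ X₁ u₁).comp (Cochain.ofHom (F.map u₂)) (by omega) -
        Ψ₁ X₀ X₂ (u₁ ≫ u₂)) = 0 := by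
  rw [δ_sub, δ_add, δ_ofHom_comp, δ_comp_ofHom, hΨ₁, hΨ₁, hΨ₁,
    Cochain.sub_comp, Cochain.comp_sub,
    Cochain.ofHom_comp, Cochain.ofHom_comp, Cochain.ofHom_comp,
    Cochain.ofHom_comp, F.map_comp, G.map_comp,
    Cochain.ofHom_comp, Cochain.ofHom_comp]
  simp only [Cochain.comp_assoc_of_third_is_zero_cochain,
    Cochain.comp_assoc_of_second_is_zero_cochain]
  simp [← Cochain.ofHom_comp]
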